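/- arXiv:1205.3735 — 2 statements merged into one kernel-verified Lean document; each statement's English description precedes it below -/
import Mathlib

section
/- Let G be a closed diamond (a square with sides at angle π/4 to the coordinate axes) with vertices x₁, x₂ = x₁ + r(1,1), x₃ = x₁ + r(1,−1), x₄ = x₁ + r(2,0) for some r > 0. Let C be the union of the three closed segments [x₁,x₃], [x₂,x₄], and [(x₁+x₂)/2, (x₃+x₄)/2]. Then for every θ ∈ (0, arctan(1/3)), the orthogonal projection of C onto the line K_θ equals the orthogonal projection of G onto K_θ. -/
open MeasureTheory Set Real

/-- Scalar orthogonal projection onto the line `K_θ = {r·e^{iθ}}`. -/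
noncomputable def proj (θ : ℝ) (A : Set ℂ) : Set ℝ :=
  (fun z : ℂ => (z * Complex.exp (-(θ : ℂ) * Complex.I)).re) '' A

set_option maxHeartbeats 1000000 in
theorem stmt3 (x₁ x₂ x₃ x₄ : ℂ) (r : ℝ) (hr : 0 < r)
    (h2 : x₂ = x₁ + r * (1 + Complex.I)) (h3 : x₃ = x₁ + r * (1 - Complex.I))
    (h4 : x₄ = x₁ + 2 * r)
    (G C : Set ℂ) (hG : G = convexHull ℝ {x₁, x₂, x₃, x₄})
    (hC : C = segment ℝ x₁ x₃ ∪ segment ℝ x₂ x₄ ∪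
      segment ℝ ((x₁ + x₂) / 2) ((x₃ + x₄) / 2))
    (θ : ℝ) (hθ : θ ∈ Ioo 0 (Real.arctan (1 / 3))) :
    proj θ C = proj θ G := by
  obtain ⟨hθ0, hθ1⟩ := hθ
  have hθπ : θ < π / 2 := lt_trans hθ1 (Real.arctan_lt_pi_div_two _)
  have hpi : 0 < π := Real.pi_pos
  have hc : 0 < Real.cos θ := Real.cos_pos_of_mem_Ioo ⟨by linarith, hθπ⟩
  have hs : 0 < Real.sin θ := Real.sin_pos_of_pos_of_lt_pi hθ0 (by linarith)
  have htan : Real.tan θ < 1 / 3 := by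
    have := Real.tan_lt_tan_of_nonneg_of_lt_pi_div_two hθ0.le
      (Real.arctan_lt_pi_div_two _) hθ1
    rwa [Real.tan_arctan] at this
  have h3s : 3 * Real.sin θ < Real.cos θ := by
    rw [Real.tan_eq_sin_div_cos, div_lt_iff₀ hc] at htan
    linarith
  -- the projection as a linear map
  set L : ℂ →ₗ[ℝ] ℝ := Real.cos θ • Complex.reLm + Real.sin θ • Complex.imLm with hL
  have hLval : ∀ z : ℂ, L z = Real.cos θ * z.re + Real.sin θ * z.im := by
    intro z; simp [hL]
  have hfL : ∀ A : Set ℂ, proj θ A = L '' A := by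
    intro A
    unfold proj
    apply Set.image_congr
    intro z _
    rw [hLval]
    have heq : (-(θ : ℂ) * Complex.I) = ((-θ : ℝ) : ℂ) * Complex.I := by push_cast; ring
    rw [heq, Complex.mul_re, Complex.exp_ofReal_mul_I_re, Complex.exp_ofReal_mul_I_im,
      Real.cos_neg, Real.sin_neg]
    ring
  set a : ℝ := Real.cos θ * x₁.re + Real.sin θ * x₁.im with ha
  set c : ℝ := Real.cos θ with hcc
  set s : ℝ := Real.sin θ with hss
  have hL1 : L x₁ = a := by rw [hLval]
  have hL2 : L x₂ = a + (r * c + r * s) := by rw [hLval, h2]; simp [Complex.add_re, Complex.add_im]; ring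
  have hL3 : L x₃ = a + (r * c - r * s) := by rw [hLval, h3]; simp [Complex.add_re, Complex.add_im, Complex.sub_re, Complex.sub_im]; ring
  have hL4 : L x₄ = a + 2 * (r * c) := by rw [hLval, h4]; simp [Complex.add_re, Complex.add_im]; ring
  have hhalf : ∀ u v : ℂ, ((u + v) / 2 : ℂ) = (2⁻¹ : ℝ) • (u + v) := by
    intro u v; rw [Complex.real_smul]; push_cast; ring
  have hLm1 : L ((x₁ + x₂) / 2) = a + (r * c + r * s) / 2 := by
    rw [hhalf, L.map_smul, L.map_add, hL1, hL2, smul_eq_mul]; ring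
  have hLm2 : L ((x₃ + x₄) / 2) = a + (3 * (r * c) - r * s) / 2 := by
    rw [hhalf, L.map_smul, L.map_add, hL3, hL4, smul_eq_mul]; ring
  have hrs : 0 < r * s := mul_pos hr hs
  have hrc : 0 < r * c := mul_pos hr hc
  have hr3s : 3 * (r * s) < r * c := by
    have h := mul_lt_mul_of_pos_left h3s hr
    calc 3 * (r * s) = r * (3 * s) := by ring
      _ < r * c := h
  -- compute proj θ G
  have hG' : proj θ G = Icc a (a + 2 * (r * c)) := by
    rw [hfL, hG, L.image_convexHull]
    have himg : L '' {x₁, x₂, x₃, x₄} = {a, a + (r * c + r * s), a + (r * c - r * s), a + 2 * (r * c)} := by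
      simp only [Set.image_insert_eq, Set.image_singleton, hL1, hL2, hL3, hL4]
    rw [himg]
    apply Set.Subset.antisymm
    · apply convexHull_min _ (convex_Icc _ _)
      intro x hx
      simp only [Set.mem_insert_iff, Set.mem_singleton_iff] at hx
      simp only [Set.mem_Icc]
      rcases hx with h | h | h | h <;> subst h <;>
        exact ⟨by linarith, by linarith⟩
    · have : Icc a (a + 2 * (r * c)) = segment ℝ a (a + 2 * (r * c)) := by
        rw [segment_eq_Icc (by linarith)]
      rw [this, ← convexHull_pair]
      apply convexHull_mono
      intro x hx
      simp only [Set.mem_insert_iff, Set.mem_singleton_iff] at hx ⊢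
      tauto
  -- compute proj θ C
  have hC' : proj θ C = Icc a (a + (r * c - r * s)) ∪
      Icc (a + (r * c + r * s)) (a + 2 * (r * c)) ∪
      Icc (a + (r * c + r * s) / 2) (a + (3 * (r * c) - r * s) / 2) := by
    rw [hfL, hC]
    rw [Set.image_union, Set.image_union]
    rw [show (⇑L '' segment ℝ x₁ x₃) = segment ℝ (L x₁) (L x₃) from
        image_segment ℝ L.toAffineMap x₁ x₃,
      show (⇑L '' segment ℝ x₂ x₄) = segment ℝ (L x₂) (L x₄) from
        image_segment ℝ L.toAffineMap x₂ x₄,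
      show (⇑L '' segment ℝ ((x₁ + x₂)/2) ((x₃ + x₄)/2)) =
          segment ℝ (L ((x₁ + x₂)/2)) (L ((x₃ + x₄)/2)) from
        image_segment ℝ L.toAffineMap _ _]
    rw [hL1, hL2, hL3, hL4, hLm1, hLm2]
    rw [segment_eq_Icc (by linarith), segment_eq_Icc (by linarith),
      segment_eq_Icc (by linarith)]
  rw [hG', hC']
  ext x
  simp only [Set.mem_union, Set.mem_Icc]
  constructor
  · rintro ((⟨h1, h2⟩ | ⟨h1, h2⟩) | ⟨h1, h2⟩) <;> constructor <;> linarith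
  · rintro ⟨h1, h2⟩
    by_cases hx1 : x ≤ a + (r * c - r * s)
    · exact Or.inl (Or.inl ⟨h1, hx1⟩)
    by_cases hx2 : a + (r * c + r * s) ≤ x
    · exact Or.inl (Or.inr ⟨hx2, h2⟩)
    · push_neg at hx1 hx2
      exact Or.inr ⟨by linarith, by linarith⟩
end

section
/- For every n ≥ 1 and every permutation s = (j₁, …, j_n) of {1, …, n}, consider the rhombus Z with sides on the lines K₀, K₀ + (0,1), K_θ, and K_θ + e^{i(θ+π/2)} (where θ ∈ (0,π)), and for a set A ⊆ ℝ² define M_{n,s,k}(A) = (1/n)A − ((k−1)/n)·(1/sin θ, 0) + ((j_k−1)/n)·(e^{iθ}/sin θ) for 1 ≤ k ≤ n, and M_{n,s}(A) = ⋃_{k=1}^n M_{n,s,k}(A). Then the composition M_{n₁,s₁}(M_{n₂,s₂}(Z)) equals M_{n₃,s₃}(Z) for n₃ = n₁n₂ and some permutation s₃ of {1, …, n₃}. -/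
open MeasureTheory Set Real

/-- The rhombus `Z` bounded by the lines `K₀`, `K₀ + (0,1)`, `K_θ` and
`K_θ + e^{i(θ+π/2)}`; parametrized by the height coordinate and the signed
distance from `K_θ`. -/
noncomputable def Zrh (θ : ℝ) : Set ℂ :=
  {z : ℂ | ∃ s ∈ Icc (0 : ℝ) 1, ∃ t ∈ Icc (0 : ℝ) 1,
    z = (-(s : ℂ) + (t : ℂ) * Complex.exp ((θ : ℂ) * Complex.I)) / (Real.sin θ : ℂ)}

/-- The `k`-th scaled translated copy `M_{n,s,k}(A) = (1/n)A − (k/n)(1/sin θ)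
+ (s(k)/n)(e^{iθ}/sin θ)` (indices `0,…,n−1`). -/
noncomputable def Mk (θ : ℝ) (n : ℕ) (s : Equiv.Perm (Fin n)) (k : Fin n)
    (A : Set ℂ) : Set ℂ :=
  (fun z : ℂ => z / (n : ℂ) - ((k : ℕ) : ℂ) / (n : ℂ) * (1 / (Real.sin θ : ℂ))
      + ((s k : ℕ) : ℂ) / (n : ℂ) *
        (Complex.exp ((θ : ℂ) * Complex.I) / (Real.sin θ : ℂ))) '' A

/-- `M_{n,s}(A) = ⋃ₖ M_{n,s,k}(A)`. -/
noncomputable def MM (θ : ℝ) (n : ℕ) (s : Equiv.Perm (Fin n)) (A : Set ℂ) : Set ℂ :=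
  ⋃ k, Mk θ n s k A

theorem stmt6 (θ : ℝ) (hθ : θ ∈ Ioo 0 π) (n₁ n₂ : ℕ) (hn₁ : 1 ≤ n₁) (hn₂ : 1 ≤ n₂)
    (s₁ : Equiv.Perm (Fin n₁)) (s₂ : Equiv.Perm (Fin n₂)) :
    ∃ s₃ : Equiv.Perm (Fin (n₁ * n₂)),
      MM θ n₁ s₁ (MM θ n₂ s₂ (Zrh θ)) = MM θ (n₁ * n₂) s₃ (Zrh θ) := by
  have hs : (Real.sin θ : ℂ) ≠ 0 := by
    exact_mod_cast ne_of_gt (Real.sin_pos_of_pos_of_lt_pi hθ.1 hθ.2)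
  have hc₁ : (n₁ : ℂ) ≠ 0 := Nat.cast_ne_zero.2 (by omega)
  have hc₂ : (n₂ : ℂ) ≠ 0 := Nat.cast_ne_zero.2 (by omega)
  set s₃ : Equiv.Perm (Fin (n₁ * n₂)) :=
    finProdFinEquiv.permCongr (s₁.prodCongr s₂) with hs₃
  refine ⟨s₃, ?_⟩
  have key : ∀ (k₁ : Fin n₁) (k₂ : Fin n₂),
      Mk θ n₁ s₁ k₁ (Mk θ n₂ s₂ k₂ (Zrh θ))
        = Mk θ (n₁ * n₂) s₃ (finProdFinEquiv (k₁, k₂)) (Zrh θ) := by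
    intro k₁ k₂
    have hperm : s₃ (finProdFinEquiv (k₁, k₂)) = finProdFinEquiv (s₁ k₁, s₂ k₂) := by
      simp [hs₃, Equiv.permCongr_apply]
    unfold Mk
    rw [Set.image_image, hperm]
    apply Set.image_congr'
    intro z
    have hv1 : ((finProdFinEquiv (k₁, k₂) : Fin (n₁ * n₂)) : ℕ)
        = (k₂ : ℕ) + n₂ * (k₁ : ℕ) := by simp [finProdFinEquiv]
    have hv2 : ((finProdFinEquiv (s₁ k₁, s₂ k₂) : Fin (n₁ * n₂)) : ℕ)
        = ((s₂ k₂ : Fin n₂) : ℕ) + n₂ * ((s₁ k₁ : Fin n₁) : ℕ) := by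
      simp [finProdFinEquiv]
    rw [hv1, hv2]
    have hs' : Complex.sin θ ≠ 0 := by rwa [Complex.ofReal_sin] at hs
    push_cast
    have h4 : ∀ a b : ℂ, (a + (n₂ : ℂ) * b) / ((n₂ : ℂ) * (n₁ : ℂ))
        = a / ((n₂ : ℂ) * (n₁ : ℂ)) + b / (n₁ : ℂ) := by
      intro a b; rw [add_div, mul_div_mul_left _ _ hc₂]
    rw [mul_comm (n₁ : ℂ) (n₂ : ℂ), h4, h4]
    simp only [div_eq_mul_inv, mul_inv]
    ring
  calc MM θ n₁ s₁ (MM θ n₂ s₂ (Zrh θ))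
      = ⋃ k₁, ⋃ k₂, Mk θ n₁ s₁ k₁ (Mk θ n₂ s₂ k₂ (Zrh θ)) := by
        simp [MM, Mk, Set.image_iUnion]
    _ = ⋃ p : Fin n₁ × Fin n₂, Mk θ (n₁ * n₂) s₃ (finProdFinEquiv p) (Zrh θ) := by
        rw [Set.iUnion_prod']
        exact iUnion_congr fun k₁ => iUnion_congr fun k₂ => key k₁ k₂
    _ = ⋃ k, Mk θ (n₁ * n₂) s₃ k (Zrh θ) :=
        finProdFinEquiv.surjective.iUnion_comp
          (fun k => Mk θ (n₁ * n₂) s₃ k (Zrh θ))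
end
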